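/- Let G be a nondiscrete, noncompact, locally compact, second countable, compactly generated topological group with left Haar measure λ. Then there exists a compact generating set S of G such that λ(∂(Sⁿ)) = 0 for every integer n ≥ 1, where Sⁿ is the n-fold product set {s₁s₂⋯sₙ : s₁,…,sₙ ∈ S} and ∂ denotes the topological boundary (closure minus interior). -/

import Mathlib

open MeasureTheory ProbabilityTheory Set
open scoped ENNReal NNReal Pointwise

noncomputable section

namespace PoissonSystems

/-- A topological group is compactly generated if some compact subset `K` satisfies
`G = ⋃_{i ≥ 1} (K ∪ K⁻¹ ∪ {e})^i`. -/
def IsCompactlyGeneratedGroup (G : Type*) [Group G] [TopologicalSpace G] : Prop :=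
  ∃ K : Set G, IsCompact K ∧ ∀ g : G, ∃ n : ℕ, 1 ≤ n ∧ g ∈ (K ∪ K⁻¹ ∪ {1}) ^ n

section Aux

variable {G : Type*} [Group G] [TopologicalSpace G] [IsTopologicalGroup G]

/-- In a topological group, the closure of any set is contained in its right thickening by any
neighborhood of the identity. -/
lemma closure_subset_mul_nhds (A : Set G) {U : Set G} (hU : U ∈ nhds (1 : G)) :
    closure A ⊆ A * U := by
  intro x hx
  have hUinv : U⁻¹ ∈ nhds (1 : G) := inv_mem_nhds_one G hU
  have hx' : (fun y : G => x * y) '' U⁻¹ ∈ nhds x := by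
    have := (Homeomorph.mulLeft x).isOpenMap
    have hmap : Filter.map (fun y : G => x * y) (nhds (1 : G)) = nhds x := by
      simpa using (Homeomorph.mulLeft x).map_nhds_eq (1 : G)
    rw [← hmap]
    exact Filter.image_mem_map hUinv
  obtain ⟨a, haim, haA⟩ := mem_closure_iff_nhds.1 hx _ hx'
  obtain ⟨u, hu, rfl⟩ := haim
  have hxeq : x = (x * u) * u⁻¹ := by group
  rw [hxeq]
  exact Set.mul_mem_mul haA (Set.mem_inv.1 hu)

lemma isCompact_pow {S : Set G} (hS : IsCompact S) : ∀ n : ℕ, IsCompact (S ^ n) := by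
  intro n
  induction n with
  | zero => rw [pow_zero, ← Set.singleton_one]; exact isCompact_singleton
  | succ m ih => rw [pow_succ]; exact ih.mul hS

lemma pow_subset_subgroup {S : Set G} {H : Subgroup G} (hSH : S ⊆ (H : Set G)) :
    ∀ n : ℕ, S ^ n ⊆ (H : Set G) := by
  intro n
  induction n with
  | zero => rw [pow_zero]; exact Set.one_subset.2 H.one_mem
  | succ m ih =>
      rw [pow_succ]
      rintro x ⟨a, ha, b, hb, rfl⟩
      exact H.mul_mem (ih ha) (hSH hb)

end Aux

/-- **Lemma 3.9.** A compactly generated, nondiscrete, noncompact, locally compact, second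
countable group admits a compact generating set all of whose product-set powers have
Haar-null topological boundary. -/
theorem exists_generating_set_null_boundary
    {G : Type*} [Group G] [TopologicalSpace G] [IsTopologicalGroup G]
    [MeasurableSpace G] [BorelSpace G] [LocallyCompactSpace G]
    [SecondCountableTopology G] [NoncompactSpace G]
    (hnd : ¬ DiscreteTopology G)
    (lam : Measure G) [lam.IsHaarMeasure]
    (hCG : IsCompactlyGeneratedGroup G) :
    ∃ S : Set G, IsCompact S ∧ Subgroup.closure S = ⊤ ∧
      ∀ n : ℕ, 1 ≤ n → lam (frontier (S ^ n)) = 0 := by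
  obtain ⟨K, hKc, hKgen⟩ := hCG
  set K' : Set G := K ∪ K⁻¹ ∪ {1} with hK'def
  have hK'c : IsCompact K' := (hKc.union hKc.inv).union isCompact_singleton
  -- Urysohn function equal to 1 on K', with compact support
  obtain ⟨f, hf1, -, hfc, hf01⟩ :=
    exists_continuous_one_zero_of_isCompact hK'c isClosed_empty (disjoint_empty _)
  -- the family of superlevel sets
  set S : ℝ → Set G := fun t => {x | t ≤ f x} with hSdef
  have hSclosed : ∀ t : ℝ, IsClosed (S t) := fun t =>
    isClosed_le continuous_const f.continuous
  have hScompact : ∀ t : ℝ, 0 < t → IsCompact (S t) := by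
    intro t ht
    refine hfc.of_isClosed_subset (hSclosed t) ?_
    intro x hx
    have : f x ≠ 0 := ne_of_gt (lt_of_lt_of_le ht hx)
    exact subset_tsupport f this
  have hSanti : ∀ {s t : ℝ}, s ≤ t → S t ⊆ S s := by
    intro s t hst x hx
    exact le_trans hst hx
  have hK'S : ∀ t : ℝ, t ≤ 1 → K' ⊆ S t := by
    intro t ht x hx
    have : f x = 1 := hf1 hx
    simp only [hSdef, Set.mem_setOf_eq, this]
    exact ht
  -- key separation lemma
  have key : ∀ s t : ℝ, 0 < s → s < t → ∀ n : ℕ, 1 ≤ n →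
      closure (S t ^ n) ⊆ interior (S s ^ n) := by
    intro s t hs hst n hn
    obtain ⟨m, rfl⟩ : ∃ m, n = m + 1 := ⟨n - 1, (Nat.succ_pred_eq_of_pos hn).symm⟩
    have hopen : IsOpen {x : G | s < f x} := isOpen_lt continuous_const f.continuous
    have hsub : S t ⊆ {x : G | s < f x} := fun x hx => lt_of_lt_of_le hst hx
    obtain ⟨V, hV, hVsub⟩ :=
      compact_open_separated_mul_right (hScompact t (hs.trans hst)) hopen hsub
    have h1 : closure (S t ^ (m + 1)) ⊆ S t ^ m * (S t * V) := by
      refine (closure_subset_mul_nhds _ hV).trans ?_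
      rw [pow_succ, mul_assoc]
    have h2 : S t ^ m * (S t * V) ⊆ S s ^ m * {x : G | s < f x} :=
      Set.mul_subset_mul (Set.pow_subset_pow_left (hSanti hst.le)) hVsub
    have h3 : IsOpen (S s ^ m * {x : G | s < f x}) := hopen.mul_left
    have h4 : S s ^ m * {x : G | s < f x} ⊆ S s ^ (m + 1) := by
      rw [pow_succ]
      exact Set.mul_subset_mul_left (fun x (hx : s < f x) => hx.le)
    exact (h1.trans h2).trans (interior_maximal h4 h3)
  -- the measure of closures as a function of the parameter
  set H : ℕ → ℝ → ℝ≥0∞ := fun n t => lam (closure (S t ^ n)) with hHdef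
  have hHanti : ∀ n : ℕ, Antitone (H n) := by
    intro n s t hst
    exact measure_mono (closure_mono (Set.pow_subset_pow_left (hSanti hst)))
  -- choose a common continuity parameter
  have hDcount : (⋃ n : ℕ, {t : ℝ | ¬ContinuousAt (H n) t}).Countable :=
    Set.countable_iUnion fun n => (hHanti n).countable_not_continuousAt
  have hDense : Dense (⋃ n : ℕ, {t : ℝ | ¬ContinuousAt (H n) t})ᶜ :=
    Set.Countable.dense_compl ℝ hDcount
  obtain ⟨t₀, ht₀D, ht₀mem⟩ := hDense.exists_mem_open (isOpen_Ioo (a := (1/2 : ℝ)) (b := 1))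
    (by norm_num : Set.Nonempty (Set.Ioo (1/2 : ℝ) 1))
  obtain ⟨ht₀l, ht₀u⟩ := ht₀mem
  have ht₀pos : (0 : ℝ) < t₀ := lt_trans (by norm_num) ht₀l
  have ht₀cont : ∀ n : ℕ, ContinuousAt (H n) t₀ := by
    intro n
    by_contra h
    exact ht₀D (Set.mem_iUnion.2 ⟨n, h⟩)
  refine ⟨S t₀, hScompact t₀ ht₀pos, ?_, ?_⟩
  · -- generation
    rw [Subgroup.eq_top_iff']
    intro g
    obtain ⟨n, hn, hg⟩ := hKgen g
    have h1 : K' ⊆ S t₀ := hK'S t₀ ht₀u.le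
    have h2 : K' ^ n ⊆ S t₀ ^ n := Set.pow_subset_pow_left h1
    have h3 : S t₀ ⊆ (Subgroup.closure (S t₀) : Set G) := Subgroup.subset_closure
    exact pow_subset_subgroup h3 n (h2 hg)
  · -- null boundaries
    intro n hn
    -- finiteness
    have hhalf : closure (S t₀ ^ n) ⊆ S (1/2 : ℝ) ^ n :=
      (key (1/2) t₀ (by norm_num) ht₀l n hn).trans interior_subset
    have hfin : lam (closure (S t₀ ^ n)) ≠ ∞ := by
      refine ne_top_of_le_ne_top ?_ (measure_mono hhalf)
      exact (isCompact_pow (hScompact (1/2) (by norm_num)) n).measure_lt_top.ne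
    -- closure and interior have the same measure
    have hle : lam (closure (S t₀ ^ n)) ≤ lam (interior (S t₀ ^ n)) := by
      have htends : Filter.Tendsto (H n) (nhdsWithin t₀ (Set.Ioi t₀)) (nhds (H n t₀)) :=
        (ht₀cont n).continuousWithinAt
      refine le_of_tendsto htends ?_
      filter_upwards [self_mem_nhdsWithin] with u hu
      exact measure_mono (key t₀ u ht₀pos hu n hn)
    have hintfin : lam (interior (S t₀ ^ n)) ≠ ∞ :=
      ne_top_of_le_ne_top hfin (measure_mono (interior_subset_closure (s := S t₀ ^ n)))
    rw [frontier, measure_diff interior_subset_closure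
      isOpen_interior.measurableSet.nullMeasurableSet hintfin]
    exact tsub_eq_zero_of_le hle

end PoissonSystems
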